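/- Let (𝔤, d r) be a factorizable Lie bialgebra with r ∈ 𝔤 ⊗ 𝔤, r₊, r₋: 𝔤* → 𝔤 defined by ⟨r₊(ξ), η⟩ = r(ξ, η), ⟨r₋(ξ), η⟩ = −r(η, ξ), and I = r₊ − r₋ invertible. Then the linear map Î: 𝔤* → Gr(r₋ ∘ I⁻¹) ⊆ 𝔤 ⋉_ad 𝔤 defined by Î(ξ) = (r₋(ξ), I(ξ)) is a Lie algebra isomorphism from (𝔤*, [·,·]_{𝔤*}) onto the graph Lie algebra Gr(r₋ ∘ I⁻¹), where [ξ,η]_{𝔤*} = ad*_{r₊(ξ)}η − ad*_{r₋(η)}ξ. -/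
import Mathlib


/-- For a factorizable Lie bialgebra `(𝔤, dr)` with `r₊, r₋ : 𝔤* → 𝔤`
(related by `⟨r₊ ξ, η⟩ = −⟨r₋ η, ξ⟩`, both Lie algebra homomorphisms for the
dual bracket `[ξ,η]_{𝔤*} = ad*_{r₊ξ}η − ad*_{r₋η}ξ`) and `I = r₊ − r₋`
invertible, the map `Î(ξ) = (r₋ ξ, I ξ)` is a Lie algebra isomorphism from
`(𝔤*, [·,·]_{𝔤*})` onto the graph Lie algebra `Gr(r₋ ∘ I⁻¹) ⊆ 𝔤 ⋉_ad 𝔤`: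
it is a homomorphism into the graph bracket
`[(Bx,x),(By,y)] = ([Bx,By], [Bx,y] + [x,By] + [x,y])`, is injective, and its
range is exactly the graph of `B = r₋ ∘ I⁻¹`. -/
theorem factorizable_bialgebra_graph_isomorphism
    {R 𝔤 : Type*} [Field R] [LieRing 𝔤] [LieAlgebra R 𝔤]
    (rp rm : Module.Dual R 𝔤 →ₗ[R] 𝔤)
    (hskew : ∀ ξ η : Module.Dual R 𝔤, η (rp ξ) = -ξ (rm η))
    (brD : Module.Dual R 𝔤 → Module.Dual R 𝔤 → Module.Dual R 𝔤)
    (hbrD : ∀ ξ η : Module.Dual R 𝔤,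
      brD ξ η = -(η.comp ((LieAlgebra.ad R 𝔤) (rp ξ)))
        + ξ.comp ((LieAlgebra.ad R 𝔤) (rm η)))
    (hp : ∀ ξ η : Module.Dual R 𝔤, rp (brD ξ η) = ⁅rp ξ, rp η⁆)
    (hm : ∀ ξ η : Module.Dual R 𝔤, rm (brD ξ η) = ⁅rm ξ, rm η⁆)
    (I : Module.Dual R 𝔤 ≃ₗ[R] 𝔤)
    (hI : ∀ ξ : Module.Dual R 𝔤, I ξ = rp ξ - rm ξ)
    (B : 𝔤 →ₗ[R] 𝔤) (hB : ∀ x : 𝔤, B x = rm (I.symm x)) :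
    (∀ ξ η : Module.Dual R 𝔤,
      ((rm (brD ξ η), I (brD ξ η)) : 𝔤 × 𝔤)
        = (⁅rm ξ, rm η⁆, ⁅B (I ξ), I η⁆ + ⁅I ξ, B (I η)⁆ + ⁅I ξ, I η⁆)) ∧
    Function.Injective (fun ξ : Module.Dual R 𝔤 => ((rm ξ, I ξ) : 𝔤 × 𝔤)) ∧
    Set.range (fun ξ : Module.Dual R 𝔤 => ((rm ξ, I ξ) : 𝔤 × 𝔤))
      = Set.range (fun x : 𝔤 => ((B x, x) : 𝔤 × 𝔤)) := by
  have hBI : ∀ ξ, B (I ξ) = rm ξ := fun ξ => by rw [hB, I.symm_apply_apply]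
  refine ⟨fun ξ η => ?_, fun ξ η h => ?_, ?_⟩
  · have h2 : I (brD ξ η) = ⁅B (I ξ), I η⁆ + ⁅I ξ, B (I η)⁆ + ⁅I ξ, I η⁆ := by
      rw [hI, hp, hm, hBI, hBI, hI ξ, hI η]
      simp only [lie_sub, sub_lie]
      abel
    rw [hm, h2]
  · exact I.injective (congrArg Prod.snd h)
  · ext p
    simp only [Set.mem_range]
    constructor
    · rintro ⟨ξ, rfl⟩
      exact ⟨I ξ, by rw [hBI]⟩
    · rintro ⟨x, rfl⟩
      exact ⟨I.symm x, by rw [hB, I.apply_symm_apply]⟩
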